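/- Let ℓ ≥ 1, L ≥ ℓ+1, N ≥ 2L+ℓ, let u^(N) be the unique nonnegative solution of the truncated system with bounded large initial data on [0,T₁] where T₁ = ℓ/(2(ℓ+1)), and let (A_n) be the Catalan-like sequence associated with L and ℓ. Then for every i ≥ 2L+ℓ and every t ∈ (0,T₁], one has u_i^(N)(t) ≤ (A_i/i) · t^{(i−ℓ)/(2L) − 1}. -/

import Mathlib

open Finset Filter Topology

noncomputable section

/-- Total reaction probability mass for the truncated system:
`M^(N)(t) = ∑_{j=ℓ+1}^{N−1} ∑_{k=ℓ+1}^{N−j+ℓ} j k u_j(t) u_k(t)`. -/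
def MNfun (ℓ N : ℕ) (u : ℕ → ℝ → ℝ) (t : ℝ) : ℝ :=
  ∑ j ∈ Finset.Icc (ℓ + 1) (N - 1), ∑ k ∈ Finset.Icc (ℓ + 1) (N - j + ℓ),
    (j : ℝ) * (k : ℝ) * u j t * u k t

/-- Right-hand side of the truncated system for `u n` (`ℓ+1 ≤ n ≤ N`). -/
def truncRHS (ℓ N : ℕ) (u : ℕ → ℝ → ℝ) (n : ℕ) (t : ℝ) : ℝ :=
  if n = ℓ + 1 then
    -(2 * ((ℓ : ℝ) + 1) * u (ℓ + 1) t / MNfun ℓ N u t) *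
      ∑ k ∈ Finset.Icc (ℓ + 1) (N - 1), (k : ℝ) * u k t
  else if n = N then
    (1 / MNfun ℓ N u t) *
      ∑ k ∈ Finset.Icc (ℓ + 1) (N - 1),
        (k : ℝ) * ((N - k + ℓ : ℕ) : ℝ) * u k t * u (N - k + ℓ) t
  else
    (1 / MNfun ℓ N u t) *
      ((∑ k ∈ Finset.Icc (ℓ + 1) (n - 1),
          (k : ℝ) * ((n - k + ℓ : ℕ) : ℝ) * u k t * u (n - k + ℓ) t)
        - 2 * (n : ℝ) * u n t *
            ∑ k ∈ Finset.Icc (ℓ + 1) (N - n + ℓ), (k : ℝ) * u k t)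

/-- `u` is a (C¹) solution of the truncated system on `[0,T]` with
initial data `u0`. -/
structure IsTruncSolution (ℓ N : ℕ) (T : ℝ) (u0 : ℕ → ℝ) (u : ℕ → ℝ → ℝ) :
    Prop where
  contDiff : ∀ n ∈ Finset.Icc (ℓ + 1) N, ContDiffOn ℝ 1 (u n) (Set.Icc 0 T)
  init : ∀ n ∈ Finset.Icc (ℓ + 1) N, u n 0 = u0 n
  ode : ∀ n ∈ Finset.Icc (ℓ + 1) N, ∀ t ∈ Set.Icc (0 : ℝ) T,
    HasDerivWithinAt (u n) (truncRHS ℓ N u n t) (Set.Icc 0 T) t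

def gainF (ℓ : ℕ) (u : ℕ → ℝ → ℝ) (n : ℕ) (t : ℝ) : ℝ :=
  ∑ k ∈ Finset.Icc (ℓ + 1) (n - 1),
    (k : ℝ) * ((n - k + ℓ : ℕ) : ℝ) * u k t * u (n - k + ℓ) t

def lossF (ℓ N : ℕ) (u : ℕ → ℝ → ℝ) (n : ℕ) (t : ℝ) : ℝ :=
  2 * (n : ℝ) * u n t * ∑ k ∈ Finset.Icc (ℓ + 1) (N - n + ℓ), (k : ℝ) * u k t

lemma gain_total (ℓ N : ℕ) (u : ℕ → ℝ → ℝ) (t : ℝ) :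
    ∑ n ∈ Finset.Icc (ℓ + 1) N, gainF ℓ u n t = MNfun ℓ N u t := by
  unfold gainF MNfun
  rw [Finset.sum_sigma', Finset.sum_sigma']
  refine Finset.sum_bij' (fun p _ => (⟨p.2, p.1 - p.2 + ℓ⟩ : Σ _ : ℕ, ℕ))
    (fun p _ => (⟨p.1 + p.2 - ℓ, p.1⟩ : Σ _ : ℕ, ℕ)) ?_ ?_ ?_ ?_ ?_
  · rintro ⟨n, k⟩ hp
    simp only [Finset.mem_sigma, Finset.mem_Icc] at hp ⊢
    omega
  · rintro ⟨j, k⟩ hp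
    simp only [Finset.mem_sigma, Finset.mem_Icc] at hp ⊢
    omega
  · rintro ⟨n, k⟩ hp
    simp only [Finset.mem_sigma, Finset.mem_Icc] at hp
    show (⟨k + (n - k + ℓ) - ℓ, k⟩ : Σ _ : ℕ, ℕ) = ⟨n, k⟩
    rw [show k + (n - k + ℓ) - ℓ = n from by omega]
  · rintro ⟨j, k⟩ hp
    simp only [Finset.mem_sigma, Finset.mem_Icc] at hp
    show (⟨j, j + k - ℓ - j + ℓ⟩ : Σ _ : ℕ, ℕ) = ⟨j, k⟩
    rw [show j + k - ℓ - j + ℓ = k from by omega]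
  · rintro ⟨n, k⟩ hp
    rfl

lemma loss_total (ℓ N : ℕ) (u : ℕ → ℝ → ℝ) (t : ℝ) (hN : ℓ + 1 ≤ N) :
    ∑ n ∈ Finset.Icc (ℓ + 1) N, lossF ℓ N u n t = 2 * MNfun ℓ N u t := by
  obtain ⟨N', rfl⟩ : ∃ N', N = N' + 1 := ⟨N - 1, by omega⟩
  rw [Finset.sum_Icc_succ_top (by omega)]
  have h1 : lossF ℓ (N' + 1) u (N' + 1) t = 0 := by
    unfold lossF
    rw [show N' + 1 - (N' + 1) + ℓ = ℓ from by omega,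
      Finset.Icc_eq_empty (by omega), Finset.sum_empty, mul_zero]
  rw [h1, add_zero]
  unfold lossF MNfun
  rw [show N' + 1 - 1 = N' from rfl, Finset.mul_sum]
  refine Finset.sum_congr rfl fun j hj => ?_
  rw [Finset.mul_sum, Finset.mul_sum]
  refine Finset.sum_congr rfl fun k hk => ?_
  ring

lemma le_of_deriv_nonneg' {T : ℝ} {f f' : ℝ → ℝ}
    (hc : ContinuousOn f (Set.Icc 0 T))
    (hd : ∀ t ∈ Set.Ioo (0 : ℝ) T, HasDerivAt f (f' t) t)
    (h0 : ∀ t ∈ Set.Ioo (0 : ℝ) T, 0 ≤ f' t) :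
    ∀ t ∈ Set.Icc (0 : ℝ) T, f 0 ≤ f t := by
  intro t ht
  have hmono : MonotoneOn f (Set.Icc 0 T) := by
    refine monotoneOn_of_hasDerivWithinAt_nonneg (f' := f') (convex_Icc 0 T) hc ?_ ?_
    · intro x hx
      rw [interior_Icc] at hx
      exact (hd x hx).hasDerivWithinAt
    · intro x hx
      rw [interior_Icc] at hx
      exact h0 x hx
  exact hmono (Set.left_mem_Icc.2 (ht.1.trans ht.2)) ht ht.1

set_option maxHeartbeats 1600000 in
/-- monomial growth bounds for the truncated system.  Let `ℓ ≥ 1`,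
`L ≥ ℓ+1`, `N ≥ 2L+ℓ`, let `u` be the unique nonnegative solution of the
truncated system with bounded large initial data on `[0,T₁]`,
`T₁ = ℓ/(2(ℓ+1))`, and let `A` be the Catalan-like sequence associated with `L`
and `ℓ`, i.e. `A_k = k` for `ℓ+1 ≤ k ≤ 2L+ℓ` and
`A_{n+1} = (n+1) (2L/(n+1−ℓ−2L)) ∑_{k=ℓ+1}^{n} A_k A_{n−k+ℓ+1}` for `n ≥ 2L+ℓ`.
Then `u_i(t) ≤ (A_i/i) t^{(i−ℓ)/(2L)−1}` for all `2L+ℓ ≤ i ≤ N` and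
`t ∈ (0,T₁]`. -/
theorem truncated_system_monomial_bound (ℓ L N : ℕ) (hℓ : 1 ≤ ℓ)
    (hL : ℓ + 1 ≤ L) (hN : 2 * L + ℓ ≤ N) (u0 : ℕ → ℝ) (h0 : ∀ i, 0 ≤ u0 i)
    (hbdd : ∀ i, L < i → u0 i = 0)
    (hsum : ∑ i ∈ Finset.Icc (ℓ + 1) L, u0 i = 1)
    (u : ℕ → ℝ → ℝ) (hu : IsTruncSolution ℓ N (ℓ / (2 * (ℓ + 1)) : ℝ) u0 u)
    (hnonneg : ∀ n ∈ Finset.Icc (ℓ + 1) N,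
      ∀ t ∈ Set.Icc (0 : ℝ) (ℓ / (2 * (ℓ + 1)) : ℝ), 0 ≤ u n t)
    (A : ℕ → ℝ)
    (hA₁ : ∀ k : ℕ, ℓ + 1 ≤ k → k ≤ 2 * L + ℓ → A k = k)
    (hA₂ : ∀ n : ℕ, 2 * L + ℓ ≤ n →
      A (n + 1) = ((n : ℝ) + 1) * (2 * (L : ℝ) / ((n : ℝ) + 1 - ℓ - 2 * L)) *
        ∑ k ∈ Finset.Icc (ℓ + 1) n, A k * A (n - k + ℓ + 1)) :
    ∀ i : ℕ, 2 * L + ℓ ≤ i → i ≤ N →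
      ∀ t ∈ Set.Ioc (0 : ℝ) (ℓ / (2 * (ℓ + 1)) : ℝ),
        u i t ≤ (A i / i) * t ^ (((i : ℝ) - ℓ) / (2 * L) - 1) := by
  set T : ℝ := (ℓ / (2 * (ℓ + 1)) : ℝ) with hTdef
  have hl0 : (0:ℝ) < ℓ := by exact_mod_cast hℓ
  have hL0 : (0:ℝ) < L := by exact_mod_cast (by omega : 0 < L)
  have hT0 : 0 < T := by
    rw [hTdef]; positivity
  have hT1 : T ≤ 1 := by
    rw [hTdef, div_le_one (by positivity)]; linarith
  have hTl : 2 * ((ℓ:ℝ) + 1) * T = ℓ := by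
    rw [hTdef]; field_simp
  have hmem : ∀ n, ℓ + 1 ≤ n → n ≤ N → n ∈ Finset.Icc (ℓ + 1) N :=
    fun n h1 h2 => Finset.mem_Icc.2 ⟨h1, h2⟩
  have hnn : ∀ t ∈ Set.Icc (0:ℝ) T, ∀ k, ℓ + 1 ≤ k → k ≤ N → 0 ≤ u k t :=
    fun t ht k h1 h2 => hnonneg k (hmem k h1 h2) t ht
  -- nonnegativity of the basic quantities
  have hM0 : ∀ t ∈ Set.Icc (0:ℝ) T, 0 ≤ MNfun ℓ N u t := by
    intro t ht
    refine Finset.sum_nonneg fun j hj => Finset.sum_nonneg fun k hk => ?_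
    simp only [Finset.mem_Icc] at hj hk
    have h1 := hnn t ht j (by omega) (by omega)
    have h2 := hnn t ht k (by omega) (by omega)
    positivity
  have hgain0 : ∀ t ∈ Set.Icc (0:ℝ) T, ∀ n, n ≤ N → 0 ≤ gainF ℓ u n t := by
    intro t ht n hnN
    refine Finset.sum_nonneg fun k hk => ?_
    simp only [Finset.mem_Icc] at hk
    have h1 := hnn t ht k (by omega) (by omega)
    have h2 := hnn t ht (n - k + ℓ) (by omega) (by omega)
    positivity
  have hloss0 : ∀ t ∈ Set.Icc (0:ℝ) T, ∀ n, ℓ + 1 ≤ n → n ≤ N →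
      0 ≤ lossF ℓ N u n t := by
    intro t ht n h1 h2
    refine mul_nonneg (mul_nonneg (by positivity) (hnn t ht n h1 h2))
      (Finset.sum_nonneg fun k hk => ?_)
    simp only [Finset.mem_Icc] at hk
    have := hnn t ht k (by omega) (by omega)
    positivity
  -- uniform formula for the right-hand side
  have htrunc_eq : ∀ n, ℓ + 1 ≤ n → n ≤ N → ∀ t,
      truncRHS ℓ N u n t
        = (1 / MNfun ℓ N u t) * (gainF ℓ u n t - lossF ℓ N u n t) := by
    intro n h1 h2 t
    unfold truncRHS gainF lossF
    split_ifs with hc1 hc2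
    · rw [hc1]
      rw [show ℓ + 1 - 1 = ℓ from rfl,
        show Finset.Icc (ℓ + 1) ℓ = ∅ from Finset.Icc_eq_empty (by omega),
        Finset.sum_empty, show N - (ℓ + 1) + ℓ = N - 1 from by omega]
      push_cast
      ring
    · rw [hc2]
      rw [show N - N + ℓ = ℓ from by omega,
        show Finset.Icc (ℓ + 1) ℓ = ∅ from Finset.Icc_eq_empty (by omega),
        Finset.sum_empty]
      ring
    · ring
  have hrhs_le_gain : ∀ t ∈ Set.Icc (0:ℝ) T, ∀ n, ℓ + 1 ≤ n → n ≤ N →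
      truncRHS ℓ N u n t ≤ (1 / MNfun ℓ N u t) * gainF ℓ u n t := by
    intro t ht n h1 h2
    rw [htrunc_eq n h1 h2 t]
    exact mul_le_mul_of_nonneg_left (sub_le_self _ (hloss0 t ht n h1 h2))
      (one_div_nonneg.2 (hM0 t ht))
  -- the total reaction rate
  have hRderiv : ∀ t ∈ Set.Icc (0:ℝ) T,
      HasDerivWithinAt (fun s => ∑ n ∈ Finset.Icc (ℓ + 1) N, u n s)
        (∑ n ∈ Finset.Icc (ℓ + 1) N, truncRHS ℓ N u n t) (Set.Icc 0 T) t :=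
    fun t ht => HasDerivWithinAt.fun_sum fun n hn => hu.ode n hn t ht
  have hRbounds : ∀ t ∈ Set.Icc (0:ℝ) T,
      -1 ≤ (∑ n ∈ Finset.Icc (ℓ + 1) N, truncRHS ℓ N u n t) ∧
      (∑ n ∈ Finset.Icc (ℓ + 1) N, truncRHS ℓ N u n t) ≤ 0 := by
    intro t ht
    have hval : (∑ n ∈ Finset.Icc (ℓ + 1) N, truncRHS ℓ N u n t)
        = (1 / MNfun ℓ N u t) * (MNfun ℓ N u t - 2 * MNfun ℓ N u t) := by
      rw [show (∑ n ∈ Finset.Icc (ℓ + 1) N, truncRHS ℓ N u n t)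
          = ∑ n ∈ Finset.Icc (ℓ + 1) N,
              (1 / MNfun ℓ N u t) * (gainF ℓ u n t - lossF ℓ N u n t) from
        Finset.sum_congr rfl fun n hn => by
          simp only [Finset.mem_Icc] at hn
          exact htrunc_eq n hn.1 hn.2 t]
      rw [← Finset.mul_sum, Finset.sum_sub_distrib, gain_total,
        loss_total ℓ N u t (by omega)]
    rcases eq_or_lt_of_le (hM0 t ht) with hM | hM
    · rw [hval, ← hM]
      norm_num
    · have : (1 / MNfun ℓ N u t) * (MNfun ℓ N u t - 2 * MNfun ℓ N u t) = -1 := by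
        field_simp
        ring
      rw [hval, this]
      norm_num
  -- the zeroth moment P
  have hPcont : ContinuousOn (fun s => ∑ n ∈ Finset.Icc (ℓ + 1) N, u n s)
      (Set.Icc 0 T) := fun t ht => (hRderiv t ht).continuousWithinAt
  have hP0 : (∑ n ∈ Finset.Icc (ℓ + 1) N, u n 0) = 1 := by
    rw [show (∑ n ∈ Finset.Icc (ℓ + 1) N, u n 0)
        = ∑ n ∈ Finset.Icc (ℓ + 1) N, u0 n from
      Finset.sum_congr rfl fun n hn => hu.init n hn]
    rw [← Finset.sum_subset (Finset.Icc_subset_Icc_right (by omega : L ≤ N))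
      fun x hx hx' => hbdd x (by
        simp only [Finset.mem_Icc] at hx hx'
        omega)]
    exact hsum
  have hPle1 : ∀ t ∈ Set.Icc (0:ℝ) T, (∑ n ∈ Finset.Icc (ℓ + 1) N, u n t) ≤ 1 := by
    intro t ht
    have := le_of_deriv_nonneg'
      (f := fun s => -(∑ n ∈ Finset.Icc (ℓ + 1) N, u n s))
      (f' := fun s => -(∑ n ∈ Finset.Icc (ℓ + 1) N, truncRHS ℓ N u n s))
      hPcont.neg
      (fun s hs => (((hRderiv s ⟨hs.1.le, hs.2.le⟩).hasDerivAt
        (Icc_mem_nhds hs.1 hs.2)).neg))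
      (fun s hs => neg_nonneg.2 (hRbounds s ⟨hs.1.le, hs.2.le⟩).2) t ht
    simp only [neg_le_neg_iff] at this
    calc (∑ n ∈ Finset.Icc (ℓ + 1) N, u n t)
        ≤ (∑ n ∈ Finset.Icc (ℓ + 1) N, u n 0) := this
      _ = 1 := hP0
  have hPge : ∀ t ∈ Set.Icc (0:ℝ) T, 1 - t ≤ ∑ n ∈ Finset.Icc (ℓ + 1) N, u n t := by
    intro t ht
    have := le_of_deriv_nonneg'
      (f := fun s => (∑ n ∈ Finset.Icc (ℓ + 1) N, u n s) + s)
      (f' := fun s => (∑ n ∈ Finset.Icc (ℓ + 1) N, truncRHS ℓ N u n s) + 1)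
      (hPcont.add continuousOn_id)
      (fun s hs => (((hRderiv s ⟨hs.1.le, hs.2.le⟩).hasDerivAt
        (Icc_mem_nhds hs.1 hs.2)).add (hasDerivAt_id s)))
      (fun s hs => by
        have h := (hRbounds s ⟨hs.1.le, hs.2.le⟩).1
        show (0:ℝ) ≤ (∑ n ∈ Finset.Icc (ℓ + 1) N, truncRHS ℓ N u n s) + 1
        linarith) t ht
    simp only [hP0, add_zero] at this
    linarith
  have hu_le1 : ∀ t ∈ Set.Icc (0:ℝ) T, ∀ k, ℓ + 1 ≤ k → k ≤ N → u k t ≤ 1 := by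
    intro t ht k h1 h2
    refine le_trans ?_ (hPle1 t ht)
    exact Finset.single_le_sum (f := fun n => u n t)
      (fun n hn => hnonneg n hn t ht) (hmem k h1 h2)
  -- the number of large clusters Q
  have hQsub : Finset.Icc (L + 1) N ⊆ Finset.Icc (ℓ + 1) N :=
    Finset.Icc_subset_Icc_left (by omega)
  have hQderiv : ∀ t ∈ Set.Icc (0:ℝ) T,
      HasDerivWithinAt (fun s => ∑ n ∈ Finset.Icc (L + 1) N, u n s)
        (∑ n ∈ Finset.Icc (L + 1) N, truncRHS ℓ N u n t) (Set.Icc 0 T) t :=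
    fun t ht => HasDerivWithinAt.fun_sum fun n hn => hu.ode n (hQsub hn) t ht
  have hRQle1 : ∀ t ∈ Set.Icc (0:ℝ) T,
      (∑ n ∈ Finset.Icc (L + 1) N, truncRHS ℓ N u n t) ≤ 1 := by
    intro t ht
    have step1 : (∑ n ∈ Finset.Icc (L + 1) N, truncRHS ℓ N u n t)
        ≤ ∑ n ∈ Finset.Icc (L + 1) N, (1 / MNfun ℓ N u t) * gainF ℓ u n t := by
      refine Finset.sum_le_sum fun n hn => ?_
      simp only [Finset.mem_Icc] at hn
      exact hrhs_le_gain t ht n (by omega) hn.2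
    have step2 : (∑ n ∈ Finset.Icc (L + 1) N, (1 / MNfun ℓ N u t) * gainF ℓ u n t)
        = (1 / MNfun ℓ N u t) * ∑ n ∈ Finset.Icc (L + 1) N, gainF ℓ u n t :=
      (Finset.mul_sum _ _ _).symm
    have step3 : (∑ n ∈ Finset.Icc (L + 1) N, gainF ℓ u n t)
        ≤ ∑ n ∈ Finset.Icc (ℓ + 1) N, gainF ℓ u n t := by
      refine Finset.sum_le_sum_of_subset_of_nonneg hQsub fun n hn _ => ?_
      simp only [Finset.mem_Icc] at hn
      exact hgain0 t ht n hn.2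
    have step4 : (1 / MNfun ℓ N u t) * (∑ n ∈ Finset.Icc (ℓ + 1) N, gainF ℓ u n t)
        ≤ 1 := by
      rw [gain_total]
      rcases eq_or_lt_of_le (hM0 t ht) with hM | hM
      · rw [← hM]; norm_num
      · rw [one_div_mul_cancel hM.ne']
    calc (∑ n ∈ Finset.Icc (L + 1) N, truncRHS ℓ N u n t)
        ≤ (1 / MNfun ℓ N u t) * ∑ n ∈ Finset.Icc (L + 1) N, gainF ℓ u n t := by
          rw [← step2]; exact step1
      _ ≤ (1 / MNfun ℓ N u t) * ∑ n ∈ Finset.Icc (ℓ + 1) N, gainF ℓ u n t :=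
          mul_le_mul_of_nonneg_left step3 (one_div_nonneg.2 (hM0 t ht))
      _ ≤ 1 := step4
  have hQ0 : (∑ n ∈ Finset.Icc (L + 1) N, u n 0) = 0 :=
    Finset.sum_eq_zero fun n hn => by
      rw [hu.init n (hQsub hn)]
      exact hbdd n (by simp only [Finset.mem_Icc] at hn; omega)
  have hQle : ∀ t ∈ Set.Icc (0:ℝ) T,
      (∑ n ∈ Finset.Icc (L + 1) N, u n t) ≤ t := by
    intro t ht
    have := le_of_deriv_nonneg'
      (f := fun s => s - ∑ n ∈ Finset.Icc (L + 1) N, u n s)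
      (f' := fun s => 1 - ∑ n ∈ Finset.Icc (L + 1) N, truncRHS ℓ N u n s)
      (continuousOn_id.sub (fun x hx => (hQderiv x hx).continuousWithinAt))
      (fun s hs => ((hasDerivAt_id s).sub ((hQderiv s ⟨hs.1.le, hs.2.le⟩).hasDerivAt
        (Icc_mem_nhds hs.1 hs.2))))
      (fun s hs => by
        have h := hRQle1 s ⟨hs.1.le, hs.2.le⟩
        show (0:ℝ) ≤ 1 - ∑ n ∈ Finset.Icc (L + 1) N, truncRHS ℓ N u n s
        linarith) t ht
    simp only [hQ0, sub_zero, zero_sub] at this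
    linarith
  -- the lower bound on M
  have hM1 : ∀ t ∈ Set.Icc (0:ℝ) T, 1 ≤ MNfun ℓ N u t := by
    intro t ht
    have hPQ : (∑ n ∈ Finset.Icc (ℓ + 1) N, u n t)
        - (∑ n ∈ Finset.Icc (L + 1) N, u n t)
        = ∑ n ∈ Finset.Icc (ℓ + 1) L, u n t := by
      have hcons := Finset.sum_Ioc_consecutive (fun n => u n t)
        (show ℓ ≤ L by omega) (show L ≤ N by omega)
      have e1 : Finset.Icc (ℓ + 1) N = Finset.Ioc ℓ N := Finset.Icc_add_one_left_eq_Ioc ℓ N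
      have e2 : Finset.Icc (L + 1) N = Finset.Ioc L N := Finset.Icc_add_one_left_eq_Ioc L N
      have e3 : Finset.Icc (ℓ + 1) L = Finset.Ioc ℓ L := Finset.Icc_add_one_left_eq_Ioc ℓ L
      rw [e1, e2, e3]
      linarith [hcons]
    have h1 : ((ℓ:ℝ) + 1) * ((∑ n ∈ Finset.Icc (ℓ + 1) N, u n t)
        - (∑ n ∈ Finset.Icc (L + 1) N, u n t))
        ≤ ∑ k ∈ Finset.Icc (ℓ + 1) L, (k:ℝ) * u k t := by
      rw [hPQ, Finset.mul_sum]
      refine Finset.sum_le_sum fun k hk => ?_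
      simp only [Finset.mem_Icc] at hk
      have hcast : ((ℓ:ℝ) + 1) ≤ (k:ℝ) := by exact_mod_cast hk.1
      exact mul_le_mul_of_nonneg_right hcast (hnn t ht k hk.1 (by omega))
    have h2 : (1:ℝ) ≤ ((ℓ:ℝ) + 1) * ((∑ n ∈ Finset.Icc (ℓ + 1) N, u n t)
        - (∑ n ∈ Finset.Icc (L + 1) N, u n t)) := by
      have hp := hPge t ht
      have hq := hQle t ht
      have hkey : 0 ≤ ((ℓ:ℝ) + 1) * (((∑ n ∈ Finset.Icc (ℓ + 1) N, u n t)
          - (∑ n ∈ Finset.Icc (L + 1) N, u n t)) - (1 - 2 * T)) := by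
        refine mul_nonneg (by positivity) ?_
        have : t ≤ T := ht.2
        linarith
      nlinarith [hTl]
    have hσnn : (0:ℝ) ≤ ∑ k ∈ Finset.Icc (ℓ + 1) L, (k:ℝ) * u k t := by
      refine Finset.sum_nonneg fun k hk => ?_
      simp only [Finset.mem_Icc] at hk
      have := hnn t ht k hk.1 (by omega)
      positivity
    have h3 : (∑ k ∈ Finset.Icc (ℓ + 1) L, (k:ℝ) * u k t)
        * (∑ k ∈ Finset.Icc (ℓ + 1) L, (k:ℝ) * u k t) ≤ MNfun ℓ N u t := by
      rw [Finset.sum_mul_sum]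
      unfold MNfun
      have inner : ∀ j ∈ Finset.Icc (ℓ + 1) L,
          (∑ k ∈ Finset.Icc (ℓ + 1) L, ((j:ℝ) * u j t) * ((k:ℝ) * u k t))
          ≤ ∑ k ∈ Finset.Icc (ℓ + 1) (N - j + ℓ),
              (j : ℝ) * (k : ℝ) * u j t * u k t := by
        intro j hj
        simp only [Finset.mem_Icc] at hj
        have hrw : (∑ k ∈ Finset.Icc (ℓ + 1) L, ((j:ℝ) * u j t) * ((k:ℝ) * u k t))
            = ∑ k ∈ Finset.Icc (ℓ + 1) L, (j : ℝ) * (k : ℝ) * u j t * u k t :=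
          Finset.sum_congr rfl fun k _ => by ring
        rw [hrw]
        refine Finset.sum_le_sum_of_subset_of_nonneg
          (Finset.Icc_subset_Icc_right (by omega)) fun k hk _ => ?_
        simp only [Finset.mem_Icc] at hk
        have hj0 := hnn t ht j hj.1 (by omega)
        have hk0 := hnn t ht k hk.1 (by omega)
        positivity
      calc (∑ j ∈ Finset.Icc (ℓ + 1) L,
              ∑ k ∈ Finset.Icc (ℓ + 1) L, ((j:ℝ) * u j t) * ((k:ℝ) * u k t))
          ≤ ∑ j ∈ Finset.Icc (ℓ + 1) L, ∑ k ∈ Finset.Icc (ℓ + 1) (N - j + ℓ),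
              (j : ℝ) * (k : ℝ) * u j t * u k t := Finset.sum_le_sum inner
        _ ≤ ∑ j ∈ Finset.Icc (ℓ + 1) (N - 1), ∑ k ∈ Finset.Icc (ℓ + 1) (N - j + ℓ),
              (j : ℝ) * (k : ℝ) * u j t * u k t := by
            refine Finset.sum_le_sum_of_subset_of_nonneg
              (Finset.Icc_subset_Icc_right (by omega)) fun j hj _ => ?_
            refine Finset.sum_nonneg fun k hk => ?_
            simp only [Finset.mem_Icc] at hj hk
            have hj0 := hnn t ht j (by omega) (by omega)
            have hk0 := hnn t ht k (by omega) (by omega)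
            positivity
    nlinarith [h1, h2, h3, hσnn]
  -- nonnegativity of the Catalan-like sequence
  have hA0 : ∀ m, ℓ + 1 ≤ m → 0 ≤ A m := by
    intro m
    induction m using Nat.strong_induction_on with
    | _ m ih =>
      intro hm
      by_cases hc : m ≤ 2 * L + ℓ
      · rw [hA₁ m hm hc]; positivity
      · obtain ⟨n, rfl⟩ : ∃ n, m = n + 1 := ⟨m - 1, by omega⟩
        rw [hA₂ n (by omega)]
        have hden : (0:ℝ) < (n:ℝ) + 1 - ℓ - 2 * L := by
          have : (2 * L + ℓ : ℝ) ≤ (n:ℝ) := by exact_mod_cast (by omega : 2 * L + ℓ ≤ n)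
          push_cast at this ⊢
          linarith
        refine mul_nonneg (mul_nonneg (by positivity) (div_nonneg (by positivity) hden.le))
          (Finset.sum_nonneg fun k hk => ?_)
        simp only [Finset.mem_Icc] at hk
        exact mul_nonneg (ih k (by omega) hk.1) (ih (n - k + ℓ + 1) (by omega) (by omega))
  -- the main induction
  have key : ∀ i, ℓ + 1 ≤ i → i ≤ N → ∀ t ∈ Set.Ioc (0:ℝ) T,
      u i t ≤ A i / i * t ^ (((i : ℝ) - ℓ) / (2 * L) - 1) := by
    intro i
    induction i using Nat.strong_induction_on with
    | _ i ih =>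
      intro hi1 hiN t ht
      have htIcc : t ∈ Set.Icc (0:ℝ) T := ⟨ht.1.le, ht.2⟩
      by_cases hbase : i ≤ 2 * L + ℓ
      · -- base case
        rw [hA₁ i hi1 hbase, div_self (by exact_mod_cast (by omega : i ≠ 0) : (i:ℝ) ≠ 0),
          one_mul]
        have hexp : ((i : ℝ) - ℓ) / (2 * L) - 1 ≤ 0 := by
          have hle : (i:ℝ) ≤ 2 * L + ℓ := by exact_mod_cast hbase
          rw [sub_nonpos, div_le_one (by positivity)]
          linarith
        calc u i t ≤ 1 := hu_le1 t htIcc i hi1 hiN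
          _ ≤ t ^ (((i : ℝ) - ℓ) / (2 * L) - 1) :=
            Real.one_le_rpow_of_pos_of_le_one_of_nonpos ht.1 (le_trans ht.2 hT1) hexp
      · -- inductive step
        obtain ⟨n, rfl⟩ : ∃ n, i = n + 1 := ⟨i - 1, by omega⟩
        have hn : 2 * L + ℓ ≤ n := by omega
        set p : ℝ := (((n + 1 : ℕ) : ℝ) - ℓ) / (2 * L) - 1 with hpdef
        set C : ℝ := A (n + 1) / ((n + 1 : ℕ) : ℝ) with hCdef
        set SG : ℝ := ∑ k ∈ Finset.Icc (ℓ + 1) n, A k * A (n + 1 - k + ℓ) with hSGdef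
        have hcast : (((n + 1 : ℕ)) : ℝ) = (n : ℝ) + 1 := by push_cast; ring
        have hnR : (2 * L + ℓ : ℝ) ≤ (n : ℝ) := by exact_mod_cast hn
        have hd0 : (0:ℝ) < (n:ℝ) + 1 - ℓ - 2 * L := by push_cast at hnR ⊢; linarith
        have hp : p = ((n:ℝ) + 1 - ℓ - 2 * L) / (2 * L) := by
          rw [hpdef, hcast]
          field_simp
        have hp0 : 0 < p := by rw [hp]; positivity
        have hArec : A (n + 1) = ((n : ℝ) + 1) * (2 * (L : ℝ) / ((n : ℝ) + 1 - ℓ - 2 * L)) * SG := by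
          rw [hA₂ n hn, hSGdef]
          congr 1
          refine Finset.sum_congr rfl fun k hk => ?_
          simp only [Finset.mem_Icc] at hk
          rw [show n - k + ℓ + 1 = n + 1 - k + ℓ from by omega]
        have hCp : C * p = SG := by
          rw [hCdef, hArec, hcast, hp]
          field_simp
        have hSG0 : 0 ≤ SG := by
          rw [hSGdef]
          refine Finset.sum_nonneg fun k hk => ?_
          simp only [Finset.mem_Icc] at hk
          exact mul_nonneg (hA0 k hk.1) (hA0 (n + 1 - k + ℓ) (by omega))
        have hC0 : 0 ≤ C := by
          rw [hCdef]
          exact div_nonneg (hA0 (n + 1) (by omega)) (by positivity)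
        -- the differential inequality
        have hbound : ∀ s ∈ Set.Ioo (0:ℝ) T,
            truncRHS ℓ N u (n + 1) s ≤ SG * s ^ (p - 1) := by
          intro s hs
          have hsI : s ∈ Set.Icc (0:ℝ) T := ⟨hs.1.le, hs.2.le⟩
          have hs0 : (0:ℝ) < s := hs.1
          have hMs := hM1 s hsI
          have h1 : truncRHS ℓ N u (n + 1) s
              ≤ (1 / MNfun ℓ N u s) * gainF ℓ u (n + 1) s :=
            hrhs_le_gain s hsI (n + 1) (by omega) hiN
          have h2 : (1 / MNfun ℓ N u s) * gainF ℓ u (n + 1) s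
              ≤ gainF ℓ u (n + 1) s := by
            refine mul_le_of_le_one_left (hgain0 s hsI (n + 1) hiN) ?_
            rw [div_le_one (by linarith)]
            linarith
          have h3 : gainF ℓ u (n + 1) s ≤ SG * s ^ (p - 1) := by
            rw [hSGdef, Finset.sum_mul]
            unfold gainF
            rw [show n + 1 - 1 = n from rfl]
            refine Finset.sum_le_sum fun k hk => ?_
            simp only [Finset.mem_Icc] at hk
            have hkn : k ≤ n := hk.2
            have hjub : n + 1 - k + ℓ ≤ n := by omega
            have hjlb : ℓ + 1 ≤ n + 1 - k + ℓ := by omega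
            have hkN : k ≤ N := by omega
            have hjN : n + 1 - k + ℓ ≤ N := by omega
            have hihk := ih k (by omega) hk.1 hkN s ⟨hs0, hs.2.le⟩
            have hihj := ih (n + 1 - k + ℓ) (by omega) hjlb hjN s ⟨hs0, hs.2.le⟩
            have huk := hnn s hsI k hk.1 hkN
            have huj := hnn s hsI (n + 1 - k + ℓ) hjlb hjN
            have hAk := hA0 k hk.1
            have hAj := hA0 (n + 1 - k + ℓ) hjlb
            have hk0 : (0:ℝ) < (k:ℝ) := by exact_mod_cast (by omega : 0 < k)
            have hj0 : (0:ℝ) < ((n + 1 - k + ℓ : ℕ):ℝ) := by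
              exact_mod_cast (by omega : 0 < n + 1 - k + ℓ)
            have hbk : 0 ≤ (A k / k) * s ^ (((k:ℝ) - ℓ) / (2 * L) - 1) := by positivity
            have hprod : u k s * u (n + 1 - k + ℓ) s
                ≤ ((A k / k) * s ^ (((k:ℝ) - ℓ) / (2 * L) - 1))
                  * ((A (n + 1 - k + ℓ) / (n + 1 - k + ℓ : ℕ))
                      * s ^ ((((n + 1 - k + ℓ : ℕ):ℝ) - ℓ) / (2 * L) - 1)) :=
              mul_le_mul hihk hihj huj hbk
            have hjc : (((n + 1 - k + ℓ : ℕ)) : ℝ) = (n : ℝ) + 1 - k + ℓ := by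
              rw [show n + 1 - k + ℓ = n + 1 + ℓ - k from by omega,
                Nat.cast_sub (by omega)]
              push_cast
              ring
            have hexp : (((k:ℝ) - ℓ) / (2 * L) - 1)
                + ((((n + 1 - k + ℓ : ℕ):ℝ) - ℓ) / (2 * L) - 1) = p - 1 := by
              rw [hjc, hpdef, hcast]
              field_simp
              ring
            calc (k : ℝ) * ((n + 1 - k + ℓ : ℕ) : ℝ) * u k s * u (n + 1 - k + ℓ) s
                = ((k:ℝ) * ((n + 1 - k + ℓ : ℕ) : ℝ))
                    * (u k s * u (n + 1 - k + ℓ) s) := by ring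
              _ ≤ ((k:ℝ) * ((n + 1 - k + ℓ : ℕ) : ℝ))
                    * (((A k / k) * s ^ (((k:ℝ) - ℓ) / (2 * L) - 1))
                      * ((A (n + 1 - k + ℓ) / (n + 1 - k + ℓ : ℕ))
                        * s ^ ((((n + 1 - k + ℓ : ℕ):ℝ) - ℓ) / (2 * L) - 1))) :=
                  mul_le_mul_of_nonneg_left hprod (by positivity)
              _ = A k * A (n + 1 - k + ℓ)
                    * (s ^ (((k:ℝ) - ℓ) / (2 * L) - 1)
                      * s ^ ((((n + 1 - k + ℓ : ℕ):ℝ) - ℓ) / (2 * L) - 1)) := by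
                  field_simp
              _ = A k * A (n + 1 - k + ℓ) * s ^ (p - 1) := by
                  rw [← Real.rpow_add hs0, hexp]
          linarith
        -- comparison argument
        have hucont : ContinuousOn (u (n + 1)) (Set.Icc 0 T) :=
          fun x hx => (hu.ode (n + 1) (hmem (n + 1) (by omega) hiN) x hx).continuousWithinAt
        have hrpow_cont : ContinuousOn (fun s : ℝ => s ^ p) (Set.Icc 0 T) := by
          refine continuousOn_id.rpow_const fun x _ => Or.inr hp0.le
        have hcont : ContinuousOn (fun s => C * s ^ p - u (n + 1) s) (Set.Icc 0 T) :=
          (continuousOn_const.mul hrpow_cont).sub hucont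
        have happ := le_of_deriv_nonneg'
          (f := fun s => C * s ^ p - u (n + 1) s)
          (f' := fun s => C * (p * s ^ (p - 1)) - truncRHS ℓ N u (n + 1) s)
          hcont
          (fun s hs =>
            ((Real.hasDerivAt_rpow_const (p := p) (Or.inl hs.1.ne')).const_mul C).sub
              ((hu.ode (n + 1) (hmem (n + 1) (by omega) hiN) s ⟨hs.1.le, hs.2.le⟩).hasDerivAt
                (Icc_mem_nhds hs.1 hs.2)))
          (fun s hs => by
            have hb := hbound s hs
            have heq : C * (p * s ^ (p - 1)) = SG * s ^ (p - 1) := by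
              rw [← hCp]; ring
            show (0:ℝ) ≤ C * (p * s ^ (p - 1)) - truncRHS ℓ N u (n + 1) s
            rw [heq]
            linarith)
          t htIcc
        have hf0 : C * (0:ℝ) ^ p - u (n + 1) 0 = 0 := by
          rw [Real.zero_rpow hp0.ne', hu.init (n + 1) (hmem (n + 1) (by omega) hiN),
            hbdd (n + 1) (by omega)]
          ring
        rw [hf0] at happ
        linarith
  intro i hi1 hiN t ht
  exact key i (by omega) hiN t ht
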